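/- Let G be a graph with a 𝒢F-elimination forest (F, (B_u)_{u ∈ V(F)}) of height at most η, let X be a minimum feedback vertex set of G, and let u ∈ V(F). Then u has at most η children c in F for which X ∩ tree[c] is not a minimum feedback vertex set of the induced subgraph G_c = G[tree[c]]. -/

import Mathlib

/-- `X` is a feedback vertex set of `G`: removing `X` leaves an acyclic graph. -/
def IsFVS {V : Type} (G : SimpleGraph V) (X : Set V) : Prop :=
  (G.induce Xᶜ).IsAcyclic

/-- `X` is a minimum feedback vertex set of `G`. -/
def IsMinFVS {V : Type} (G : SimpleGraph V) (X : Set V) : Prop :=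
  IsFVS G X ∧ ∀ Y : Set V, IsFVS G Y → X.ncard ≤ Y.ncard

/-- Every connected component of `G[A]` contains at most one vertex of `T`. -/
def SeparatedIn {V : Type} (G : SimpleGraph V) (A T : Set V) : Prop :=
  ∀ (t₁ t₂ : V) (h₁ : t₁ ∈ A) (h₂ : t₂ ∈ A), t₁ ∈ T → t₂ ∈ T →
    (G.induce A).Reachable ⟨t₁, h₁⟩ ⟨t₂, h₂⟩ → t₁ = t₂

/-- `X` misses some vertex of `S`, or leaves two vertices of `T` connected in `G - X`. -/
def BadFor {V : Type} (G : SimpleGraph V) (S T X : Set V) : Prop :=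
  (¬ S ⊆ X) ∨ ¬ SeparatedIn G Xᶜ T
/-- A `𝒢F`-elimination forest of `G` with node type `ι`: a rooted forest given by a
parent function (roots are their own parent, and iterating the parent function from any
node eventually reaches a root), together with bags that partition `V(G)`, such that
every non-leaf bag is a singleton, every leaf bag induces a connected forest, and the
endpoints of every edge of `G` lie in bags that are in ancestor-descendant relation. -/
structure ElimForestOn (V ι : Type) (G : SimpleGraph V) where
  parent : ι → ι
  bag : ι → Set V
  wf : ∀ u : ι, ∃ n : ℕ, parent^[n + 1] u = parent^[n] u
  bag_exists : ∀ v : V, ∃ u : ι, v ∈ bag u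
  bag_unique : ∀ (v : V) (u w : ι), v ∈ bag u → v ∈ bag w → u = w
  nonleaf_singleton : ∀ u : ι, (∃ c : ι, c ≠ u ∧ parent c = u) → ∃ x : V, bag u = {x}
  leaf_forest : ∀ u : ι, (∀ c : ι, parent c = u → c = u) → (G.induce (bag u)).IsAcyclic
  leaf_connected : ∀ u : ι, (∀ c : ι, parent c = u → c = u) → (G.induce (bag u)).Connected
  edge_anc : ∀ v w : V, G.Adj v w → ∀ s t : ι, v ∈ bag s → w ∈ bag t →
    (∃ n : ℕ, parent^[n] t = s) ∨ (∃ n : ℕ, parent^[n] s = t)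

namespace ElimForestOn

variable {V ι : Type} {G : SimpleGraph V}

/-- A node is a leaf when it has no (proper) children. -/
def IsLeaf (E : ElimForestOn V ι G) (u : ι) : Prop :=
  ∀ c : ι, E.parent c = u → c = u

/-- The elimination forest is a tree: it has a unique root. -/
def IsTree (E : ElimForestOn V ι G) : Prop :=
  (∃ r : ι, E.parent r = r) ∧ ∀ u v : ι, E.parent u = u → E.parent v = v → u = v

/-- `tree[c]`: the union of the bags of `c` and of all descendants of `c`. -/
def treeSet (E : ElimForestOn V ι G) (c : ι) : Set V :=
  {v | ∃ w : ι, (∃ n : ℕ, E.parent^[n] w = c) ∧ v ∈ E.bag w}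

/-- The depth of a node: the number of edges on the path to its root. -/
noncomputable def depth (E : ElimForestOn V ι G) (u : ι) : ℕ :=
  sInf {n | E.parent^[n + 1] u = E.parent^[n] u}

/-- The height of the elimination forest: the maximum depth of a node. -/
noncomputable def height (E : ElimForestOn V ι G) : ℕ :=
  sSup (Set.range E.depth)

end ElimForestOn

section WalkAux
open SimpleGraph

variable {V : Type} {G : SimpleGraph V}

/-- Lift a walk whose support lies in `W` to the induced subgraph on `W`. -/
lemma lift_walk_induce {W : Set V} : ∀ {a b : V} (p : G.Walk a b)
    (hp : ∀ x ∈ p.support, x ∈ W) (ha : a ∈ W) (hb : b ∈ W),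
    ∃ q : (G.induce W).Walk ⟨a, ha⟩ ⟨b, hb⟩,
      q.map (SimpleGraph.Embedding.induce W).toHom = p := by
  intro a b p
  induction p with
  | nil => intro _ ha hb; exact ⟨SimpleGraph.Walk.nil, rfl⟩
  | cons h p ih =>
    intro hp ha hb
    have ha' : _ ∈ W := hp _ (by
      rw [SimpleGraph.Walk.support_cons]; exact List.mem_cons_of_mem _ p.start_mem_support)
    obtain ⟨q, hq⟩ := ih (fun x hx => hp x (by
      rw [SimpleGraph.Walk.support_cons]; exact List.mem_cons_of_mem _ hx)) ha' hb
    exact ⟨SimpleGraph.Walk.cons (by exact h) q, by subst hq; rfl⟩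

/-- A set has no `G`-cycle fully inside it. -/
def NoCyc (G : SimpleGraph V) (Z : Set V) : Prop :=
  ∀ ⦃v : V⦄ (w : G.Walk v v), w.IsCycle → ∃ x ∈ w.support, x ∉ Z

lemma induce_acyclic_iff_noCyc {Z : Set V} :
    (G.induce Z).IsAcyclic ↔ NoCyc G Z := by
  constructor
  · intro hac v w hw
    by_contra hcon
    push_neg at hcon
    have hv : v ∈ Z := hcon v w.start_mem_support
    obtain ⟨q, hq⟩ := lift_walk_induce w hcon hv hv
    have hinj : Function.Injective (SimpleGraph.Embedding.induce (G := G) Z).toHom :=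
      (SimpleGraph.Embedding.induce (G := G) Z).injective
    have : q.IsCycle :=
      (SimpleGraph.Walk.map_isCycle_iff_of_injective hinj).mp (hq ▸ hw)
    exact hac q this
  · intro hnc v w hw
    have hinj : Function.Injective (SimpleGraph.Embedding.induce (G := G) Z).toHom :=
      (SimpleGraph.Embedding.induce (G := G) Z).injective
    have := hw.map hinj
    obtain ⟨x, hx, hxZ⟩ := hnc _ this
    rw [SimpleGraph.Walk.support_map] at hx
    obtain ⟨y, _, rfl⟩ := List.mem_map.mp hx
    exact hxZ y.2

lemma induce_acyclic_mono {A B : Set V} (hAB : A ⊆ B)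
    (hB : (G.induce B).IsAcyclic) : (G.induce A).IsAcyclic := by
  rw [induce_acyclic_iff_noCyc] at *
  intro v w hw
  obtain ⟨x, hx, hxB⟩ := hB w hw
  exact ⟨x, hx, fun hxA => hxB (hAB hxA)⟩

/-- Walk confinement: if `A` is closed under adjacency within `Z`, a walk staying in `Z`
starting in `A` stays in `A`. -/
lemma walk_confine {A Z : Set V}
    (hcl : ∀ x y, x ∈ A → x ∈ Z → y ∈ Z → G.Adj x y → y ∈ A) :
    ∀ {a b : V} (p : G.Walk a b), (∀ x ∈ p.support, x ∈ Z) → a ∈ A →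
      ∀ x ∈ p.support, x ∈ A := by
  intro a b p
  induction p with
  | nil =>
    intro _ ha x hx
    rw [SimpleGraph.Walk.support_nil, List.mem_singleton] at hx
    exact hx ▸ ha
  | @cons a c b h p ih =>
    intro hp ha x hx
    have haZ : a ∈ Z := hp a (by
      rw [SimpleGraph.Walk.support_cons]; exact List.mem_cons_self)
    have hcZ : c ∈ Z := hp c (by
      rw [SimpleGraph.Walk.support_cons]; exact List.mem_cons_of_mem _ p.start_mem_support)
    have hcA : c ∈ A := hcl a c ha haZ hcZ h
    rw [SimpleGraph.Walk.support_cons, List.mem_cons] at hx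
    rcases hx with rfl | hx
    · exact ha
    · exact ih (fun y hy => hp y (by
        rw [SimpleGraph.Walk.support_cons]; exact List.mem_cons_of_mem _ hy)) hcA x hx

/-- The counting lemma: replacing the trace of `X` on pairwise disjoint sets by strictly
smaller sets saves at least one vertex per set. -/
lemma count_aux {V ι : Type} [Fintype V] [DecidableEq ι] (X : Set V) (tree Yf : ι → Set V) :
    ∀ T : Finset ι, (∀ c ∈ T, ∀ c' ∈ T, c ≠ c' → Disjoint (tree c) (tree c')) →
    (∀ c ∈ T, Yf c ⊆ tree c) → (∀ c ∈ T, (Yf c).ncard + 1 ≤ (X ∩ tree c).ncard) →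
    ((X \ ⋃ c ∈ T, tree c) ∪ ⋃ c ∈ T, Yf c).ncard + T.card ≤ X.ncard := by
  intro T
  induction T using Finset.induction_on with
  | empty => intro _ _ _; simp
  | @insert a T ha ih =>
    intro hdisj hsub hcard
    set U : Set V := ⋃ c ∈ T, tree c with hU
    set B : Set V := (X \ U) ∪ ⋃ c ∈ T, Yf c with hB
    have hBcard : B.ncard + T.card ≤ X.ncard :=
      ih (fun c hc c' hc' => hdisj c (Finset.mem_insert_of_mem hc) c'
            (Finset.mem_insert_of_mem hc'))
        (fun c hc => hsub c (Finset.mem_insert_of_mem hc))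
        (fun c hc => hcard c (Finset.mem_insert_of_mem hc))
    have hdisj_a : ∀ c ∈ T, Disjoint (tree a) (tree c) := fun c hc =>
      hdisj a (Finset.mem_insert_self a T) c (Finset.mem_insert_of_mem hc)
        (fun h => ha (h ▸ hc))
    set B' : Set V := (X \ ⋃ c ∈ insert a T, tree c) ∪ ⋃ c ∈ insert a T, Yf c with hB'
    have hsub' : B' ⊆ (B \ tree a) ∪ Yf a := by
      rintro x (⟨hxX, hxU⟩ | hxY)
      · rw [Set.mem_iUnion₂] at hxU
        push_neg at hxU
        refine Or.inl ⟨Or.inl ⟨hxX, ?_⟩, hxU a (Finset.mem_insert_self a T)⟩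
        rw [hU, Set.mem_iUnion₂]
        push_neg
        exact fun c hc => hxU c (Finset.mem_insert_of_mem hc)
      · rw [Set.mem_iUnion₂] at hxY
        obtain ⟨c, hc, hxc⟩ := hxY
        rcases Finset.mem_insert.mp hc with rfl | hc
        · exact Or.inr hxc
        · refine Or.inl ⟨Or.inr (Set.mem_iUnion₂.mpr ⟨c, hc, hxc⟩), ?_⟩
          exact fun hxa => (hdisj_a c hc).le_bot ⟨hxa, hsub c (Finset.mem_insert_of_mem hc) hxc⟩
    have hXa : X ∩ tree a ⊆ B ∩ tree a := by
      rintro x ⟨hxX, hxa⟩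
      refine ⟨Or.inl ⟨hxX, ?_⟩, hxa⟩
      rw [hU, Set.mem_iUnion₂]
      rintro ⟨c, hc, hxc⟩
      exact (hdisj_a c hc).le_bot ⟨hxa, hxc⟩
    have h1 : B'.ncard ≤ (B \ tree a).ncard + (Yf a).ncard :=
      le_trans (Set.ncard_le_ncard hsub' (Set.toFinite _)) (Set.ncard_union_le _ _)
    have h2 : (B ∩ tree a).ncard + (B \ tree a).ncard = B.ncard :=
      Set.ncard_inter_add_ncard_diff_eq_ncard B (tree a) (Set.toFinite _)
    have h3 : (X ∩ tree a).ncard ≤ (B ∩ tree a).ncard :=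
      Set.ncard_le_ncard hXa (Set.toFinite _)
    have h4 : (Yf a).ncard + 1 ≤ (X ∩ tree a).ncard :=
      hcard a (Finset.mem_insert_self a T)
    have h5 : B'.ncard + 1 ≤ B.ncard := by omega
    rw [Finset.card_insert_of_notMem ha]
    omega

end WalkAux

namespace ElimForestOn

variable {V ι : Type} {G : SimpleGraph V} (E : ElimForestOn V ι G)

lemma stab_ge {x : ι} {n : ℕ} (h : E.parent^[n + 1] x = E.parent^[n] x) :
    ∀ m, n ≤ m → E.parent^[m] x = E.parent^[n] x := by
  intro m hm
  induction m with
  | zero => simpa using (Nat.le_zero.mp hm) ▸ rfl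
  | succ k ih =>
    rcases Nat.lt_or_ge n (k + 1) with hlt | hge
    · have hk : n ≤ k := Nat.lt_succ_iff.mp hlt
      have := ih hk
      calc E.parent^[k + 1] x = E.parent (E.parent^[k] x) := Function.iterate_succ_apply' _ _ _
        _ = E.parent (E.parent^[n] x) := by rw [this]
        _ = E.parent^[n + 1] x := (Function.iterate_succ_apply' _ _ _).symm
        _ = E.parent^[n] x := h
    · exact (Nat.le_antisymm hm hge) ▸ rfl

lemma fixed_of_periodic {x : ι} {k : ℕ} (h : E.parent^[k + 1] x = x) :
    E.parent x = x := by
  obtain ⟨n, hn⟩ := E.wf x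
  have hper : ∀ j : ℕ, E.parent^[(k + 1) * j] x = x := by
    intro j
    induction j with
    | zero => simp
    | succ i ih =>
      rw [Nat.mul_succ, Function.iterate_add_apply, h]; exact ih
  have h1 : E.parent^[(k + 1) * (n + 1)] x = E.parent^[n] x :=
    E.stab_ge hn _ (le_trans (Nat.le_succ n) (Nat.le_mul_of_pos_left _ (Nat.succ_pos k)))
  have hx : E.parent^[n] x = x := by rw [← h1]; exact hper (n + 1)
  have := hn
  rw [Function.iterate_succ_apply', hx] at this
  exact this

lemma depth_stab (x : ι) : E.parent^[E.depth x + 1] x = E.parent^[E.depth x] x := by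
  have : E.depth x ∈ {n : ℕ | E.parent^[n + 1] x = E.parent^[n] x} :=
    Nat.sInf_mem ⟨_, (E.wf x).choose_spec⟩
  exact this

lemma depth_min {x : ι} {k : ℕ} (h : k < E.depth x) :
    E.parent^[k + 1] x ≠ E.parent^[k] x := fun hmem =>
  Nat.notMem_of_lt_sInf (s := {n : ℕ | E.parent^[n + 1] x = E.parent^[n] x}) h hmem

lemma depth_child {c u : ι} (hc : E.parent c = u) (hne : c ≠ u) :
    E.depth c = E.depth u + 1 := by
  have hiter : ∀ n : ℕ, E.parent^[n + 1] c = E.parent^[n] u := by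
    intro n; rw [Function.iterate_succ_apply, hc]
  apply le_antisymm
  · apply Nat.sInf_le
    show E.parent^[E.depth u + 1 + 1] c = E.parent^[E.depth u + 1] c
    rw [hiter, hiter]
    exact E.depth_stab u
  · have h0 : 0 < E.depth c := by
      rcases Nat.eq_zero_or_pos (E.depth c) with h | h
      · exfalso
        have h1 := E.depth_stab c
        rw [h] at h1
        simp only [zero_add, Function.iterate_one, Function.iterate_zero, id_eq] at h1
        exact hne ((hc.symm.trans h1).symm)
      · exact h
    obtain ⟨m, hm⟩ := Nat.exists_eq_add_of_lt h0
    rw [zero_add] at hm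
    have hmem := E.depth_stab c
    rw [hm, hiter, hiter] at hmem
    have : E.depth u ≤ m := Nat.sInf_le hmem
    omega

lemma depth_le_height [Fintype ι] (x : ι) : E.depth x ≤ E.height :=
  le_csSup ((Set.finite_range E.depth).bddAbove) (Set.mem_range_self x)

/-- Ancestors of a node are comparable. -/
lemma anc_comparable {x y z : ι} {a b : ℕ} (hy : E.parent^[a] x = y)
    (hz : E.parent^[b] x = z) :
    (∃ k, E.parent^[k] y = z) ∨ (∃ k, E.parent^[k] z = y) := by
  rcases Nat.le_total a b with h | h
  · left; exact ⟨b - a, by rw [← hy, ← Function.iterate_add_apply, Nat.sub_add_cancel h, hz]⟩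
  · right; exact ⟨a - b, by rw [← hz, ← Function.iterate_add_apply, Nat.sub_add_cancel h, hy]⟩

/-- A proper child of `u` is not an ancestor of `u`. -/
lemma child_not_anc {c u : ι} (hc : E.parent c = u) (hne : c ≠ u) {j : ℕ}
    (h : E.parent^[j] u = c) : False := by
  have hper : E.parent^[j + 1] u = u := by
    rw [Function.iterate_succ_apply', h, hc]
  have hfix : E.parent u = u := E.fixed_of_periodic hper
  exact hne (h.symm.trans (Function.iterate_fixed hfix j))

/-- Distinct proper children of `u` have disjoint subtrees. -/
lemma tree_disjoint {c c' u : ι} (hc : E.parent c = u) (hc' : E.parent c' = u)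
    (hnc : c ≠ u) (hnc' : c' ≠ u) (hne : c ≠ c') :
    Disjoint (E.treeSet c) (E.treeSet c') := by
  rw [Set.disjoint_left]
  rintro v ⟨w, ⟨n, hn⟩, hv⟩ ⟨w', ⟨m, hm⟩, hv'⟩
  obtain rfl : w = w' := E.bag_unique v w w' hv hv'
  rcases E.anc_comparable hn hm with ⟨k, hk⟩ | ⟨k, hk⟩
  · rcases Nat.eq_zero_or_pos k with rfl | hkpos
    · exact hne hk
    · obtain ⟨j, rfl⟩ := Nat.exists_eq_add_of_lt hkpos
      rw [zero_add, Function.iterate_succ_apply, hc] at hk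
      exact E.child_not_anc hc' hnc' hk
  · rcases Nat.eq_zero_or_pos k with rfl | hkpos
    · exact hne hk.symm
    · obtain ⟨j, rfl⟩ := Nat.exists_eq_add_of_lt hkpos
      rw [zero_add, Function.iterate_succ_apply, hc'] at hk
      exact E.child_not_anc hc hnc hk

/-- The set of vertices in bags of ancestors of `u`. -/
def ancSet (E : ElimForestOn V ι G) (u : ι) : Set V :=
  {v | ∃ j : ℕ, v ∈ E.bag (E.parent^[j] u)}

/-- The subtree of a proper child of `u` is disjoint from ancestor bags of `u`. -/
lemma tree_disjoint_anc {c u : ι} (hc : E.parent c = u) (hnc : c ≠ u) :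
    Disjoint (E.treeSet c) (E.ancSet u) := by
  rw [Set.disjoint_left]
  rintro v ⟨w, ⟨n, hn⟩, hv⟩ ⟨j, hj⟩
  obtain rfl : w = E.parent^[j] u := E.bag_unique v _ _ hv hj
  rw [← Function.iterate_add_apply] at hn
  exact E.child_not_anc hc hnc hn

/-- Edges leaving the subtree of a proper child of `u` go to ancestor bags of `u`. -/
lemma edge_out {c u : ι} (hc : E.parent c = u) {v w : V} (hadj : G.Adj v w)
    (hv : v ∈ E.treeSet c) (hw : w ∉ E.treeSet c) : w ∈ E.ancSet u := by
  obtain ⟨s, ⟨n, hn⟩, hvs⟩ := hv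
  obtain ⟨t, hwt⟩ := E.bag_exists w
  rcases E.edge_anc v w hadj s t hvs hwt with ⟨a, ha⟩ | ⟨a, ha⟩
  · exfalso
    exact hw ⟨t, ⟨n + a, by rw [Function.iterate_add_apply, ha, hn]⟩, hwt⟩
  · rcases E.anc_comparable hn ha with ⟨k, hk⟩ | ⟨k, hk⟩
    · rcases Nat.eq_zero_or_pos k with rfl | hkpos
      · refine absurd ⟨t, ⟨0, ?_⟩, hwt⟩ hw
        simp only [Function.iterate_zero, id_eq] at hk ⊢
        exact hk.symm
      · obtain ⟨j, rfl⟩ := Nat.exists_eq_add_of_lt hkpos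
        rw [zero_add, Function.iterate_succ_apply, hc] at hk
        exact ⟨j, hk ▸ hwt⟩
    · exact absurd ⟨t, ⟨k, hk⟩, hwt⟩ hw

/-- Every iterate of `parent` at `u` collapses to one with index at most `depth u`. -/
lemma collapse (u : ι) (k : ℕ) :
    ∃ k' ≤ E.depth u, E.parent^[k] u = E.parent^[k'] u := by
  rcases Nat.le_total k (E.depth u) with h | h
  · exact ⟨k, h, rfl⟩
  · exact ⟨E.depth u, le_refl _, E.stab_ge (E.depth_stab u) k h⟩

/-- Bound on the number of vertices in ancestor bags, given `u` has a proper child. -/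
lemma ancSet_ncard_le [Fintype V] {c u : ι} (hc : E.parent c = u) (hnc : c ≠ u) :
    (E.ancSet u).ncard ≤ E.depth u + 1 := by
  have hsingall : ∀ k : ℕ, ∃ x : V, E.bag (E.parent^[k] u) = {x} := by
    intro k
    obtain ⟨k', hk', heq⟩ := E.collapse u k
    rw [heq]
    apply E.nonleaf_singleton
    rcases Nat.eq_zero_or_pos k' with rfl | hkpos
    · exact ⟨c, hnc, hc⟩
    · obtain ⟨j, rfl⟩ := Nat.exists_eq_add_of_lt hkpos
      rw [zero_add]
      refine ⟨E.parent^[j] u, ?_, (Function.iterate_succ_apply' _ _ _).symm⟩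
      intro heq'
      exact E.depth_min (show j < E.depth u by omega) heq'.symm
  choose g hg using hsingall
  have hsub : E.ancSet u ⊆ g '' ↑(Finset.Iic (E.depth u)) := by
    rintro v ⟨j, hj⟩
    obtain ⟨k', hk', heq⟩ := E.collapse u j
    rw [heq, hg k'] at hj
    exact ⟨k', Finset.mem_coe.mpr (Finset.mem_Iic.mpr hk'), hj.symm⟩
  calc (E.ancSet u).ncard ≤ (g '' ↑(Finset.Iic (E.depth u))).ncard :=
        Set.ncard_le_ncard hsub (((Finset.Iic (E.depth u)).finite_toSet).image g)
    _ ≤ (↑(Finset.Iic (E.depth u)) : Set ℕ).ncard :=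
        Set.ncard_image_le ((Finset.Iic (E.depth u)).finite_toSet)
    _ = E.depth u + 1 := by rw [Set.ncard_coe_finset, Nat.card_Iic]

end ElimForestOn


/-- `X` is a minimum feedback vertex set of the induced subgraph `G[A]`. -/
def IsMinFVSOn {V : Type} (G : SimpleGraph V) (A X : Set V) : Prop :=
  X ⊆ A ∧ (G.induce (A \ X)).IsAcyclic ∧
    ∀ Y : Set V, Y ⊆ A → (G.induce (A \ Y)).IsAcyclic → X.ncard ≤ Y.ncard

theorem stmt5 (V ι : Type) [Fintype V] [Fintype ι] (G : SimpleGraph V)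
    (E : ElimForestOn V ι G) (η : ℕ) (hheight : E.height ≤ η)
    (X : Set V) (hX : IsMinFVS G X) (u : ι) :
    {c : ι | E.parent c = u ∧ c ≠ u ∧
      ¬ IsMinFVSOn G (E.treeSet c) (X ∩ E.treeSet c)}.ncard ≤ η := by
  classical
  by_contra hcon
  push_neg at hcon
  set S : Set ι := {c : ι | E.parent c = u ∧ c ≠ u ∧
      ¬ IsMinFVSOn G (E.treeSet c) (X ∩ E.treeSet c)} with hS
  -- S is nonempty
  have hSne : S.Nonempty := Set.nonempty_of_ncard_ne_zero (by omega)
  obtain ⟨c₀, hc₀⟩ := hSne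
  -- depth bound
  have hdu : E.depth u + 1 ≤ η := by
    have h1 : E.depth c₀ = E.depth u + 1 := E.depth_child hc₀.1 hc₀.2.1
    have h2 : E.depth c₀ ≤ E.height := E.depth_le_height c₀
    omega
  set P : Set V := E.ancSet u with hP
  have hPcard : P.ncard ≤ η :=
    le_trans (E.ancSet_ncard_le hc₀.1 hc₀.2.1) hdu
  -- choose better FVS's on bad subtrees
  have hYex : ∀ c ∈ S, ∃ Y : Set V, Y ⊆ E.treeSet c ∧
      (G.induce (E.treeSet c \ Y)).IsAcyclic ∧
      Y.ncard + 1 ≤ (X ∩ E.treeSet c).ncard := by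
    intro c hc
    have hsub : X ∩ E.treeSet c ⊆ E.treeSet c := Set.inter_subset_right
    have hacyc : (G.induce (E.treeSet c \ (X ∩ E.treeSet c))).IsAcyclic := by
      apply induce_acyclic_mono (B := Xᶜ) _ hX.1
      rintro x ⟨hx1, hx2⟩ hxX
      exact hx2 ⟨hxX, hx1⟩
    have := hc.2.2
    rw [IsMinFVSOn] at this
    push_neg at this
    obtain ⟨Y, hY1, hY2, hY3⟩ := this hsub hacyc
    exact ⟨Y, hY1, hY2, by omega⟩
  choose! Yf hYsub hYac hYcard using hYex
  -- the finset of bad children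
  set T : Finset ι := (Set.toFinite S).toFinset with hT
  have hmemT : ∀ c : ι, c ∈ T ↔ c ∈ S := fun c => Set.Finite.mem_toFinset _
  have hTcard : T.card = S.ncard :=
    (Set.ncard_eq_toFinset_card S (Set.toFinite S)).symm
  -- the replacement set
  set B : Set V := (X \ ⋃ c ∈ T, E.treeSet c) ∪ ⋃ c ∈ T, Yf c with hB
  set X' : Set V := B ∪ P with hX'
  -- counting
  have hcount : B.ncard + T.card ≤ X.ncard := by
    apply count_aux
    · intro c hc c' hc' hne
      exact E.tree_disjoint ((hmemT c).mp hc).1 ((hmemT c').mp hc').1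
        ((hmemT c).mp hc).2.1 ((hmemT c').mp hc').2.1 hne
    · intro c hc; exact hYsub c ((hmemT c).mp hc)
    · intro c hc; exact hYcard c ((hmemT c).mp hc)
  have hX'card : X'.ncard < X.ncard := by
    have h1 : X'.ncard ≤ B.ncard + P.ncard := Set.ncard_union_le _ _
    have h2 : η < S.ncard := hcon
    omega
  -- X' is a feedback vertex set
  have hFVS : IsFVS G X' := by
    rw [IsFVS, induce_acyclic_iff_noCyc]
    intro v w hw
    by_contra hsupp
    push_neg at hsupp
    have hYinX' : ∀ c ∈ S, Yf c ⊆ X' := by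
      intro c hc x hx
      exact Or.inl (Or.inr (Set.mem_iUnion₂.mpr ⟨c, (hmemT c).mpr hc, hx⟩))
    have hPinX' : P ⊆ X' := fun x hx => Or.inr hx
    by_cases hv : ∃ c ∈ S, v ∈ E.treeSet c
    · obtain ⟨c, hcS, hvc⟩ := hv
      -- the cycle stays in treeSet c
      have hconf : ∀ x ∈ w.support, x ∈ E.treeSet c := by
        apply walk_confine (Z := X'ᶜ) _ w hsupp hvc
        intro x y hxA hxZ hyZ hadj
        by_contra hyA
        exact hyZ (hPinX' (E.edge_out hcS.1 hadj hxA hyA))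
      -- hence it contradicts acyclicity of treeSet c \ Yf c
      have hnc := (induce_acyclic_iff_noCyc).mp (hYac c hcS)
      obtain ⟨x, hx, hxn⟩ := hnc w hw
      refine hxn ⟨hconf x hx, fun hxY => ?_⟩
      exact hsupp x hx (hYinX' c hcS hxY)
    · push_neg at hv
      -- the cycle stays out of all bad subtrees, hence in Xᶜ
      have hconf : ∀ x ∈ w.support, ∀ c ∈ S, x ∉ E.treeSet c := by
        apply walk_confine (A := {x : V | ∀ c ∈ S, x ∉ E.treeSet c}) (Z := X'ᶜ)
          _ w hsupp hv
        intro x y hxA hxZ hyZ hadj c hcS hyc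
        exact hxZ (hPinX' (E.edge_out hcS.1 hadj.symm hyc (hxA c hcS)))
      have hnc := (induce_acyclic_iff_noCyc).mp hX.1
      obtain ⟨x, hx, hxn⟩ := hnc w hw
      rw [Set.notMem_compl_iff] at hxn
      apply hsupp x hx
      refine Or.inl (Or.inl ⟨hxn, ?_⟩)
      rw [Set.mem_iUnion₂]
      rintro ⟨c, hc, hxc⟩
      exact hconf x hx c ((hmemT c).mp hc) hxc
  have := hX.2 X' hFVS
  omega
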